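/- Let Re(w) > 0, μ_η(w) = 0, and suppose η satisfies the rotation number hypothesis with rotation number ρ ≠ 0: sup_{t≥1} |∫_1^t (η(u) - ρ) du| ≤ c̃ < ∞. Then for all t ≥ 1, |ψ(t) - ρ ((w-1)/w) t^{-i Im(w)}| < 2 c̃ |1 - w²| / (1 + Re(w)) · t^{-1}; in particular sup_{t≥1} t |ψ(t) - ρ ((w-1)/w) t^{-i Im(w)}| < ∞. -/

import Mathlib

open MeasureTheory Complex Filter Set intervalIntegral Topology


/-- Integrability of `u^s * F u` on `Ioi a` for bounded measurable `F` and `Re s < -1`. -/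
lemma aux_int {F : ℝ → ℂ} {c : ℝ} (hb : ∀ t : ℝ, 1 ≤ t → ‖F t‖ ≤ c)
    (hm : AEStronglyMeasurable F (volume.restrict (Set.Ici 1)))
    {s : ℂ} (hs : s.re < -1) {a : ℝ} (ha : 1 ≤ a) :
    IntegrableOn (fun u : ℝ => (u : ℂ) ^ s * F u) (Set.Ioi a) := by
  have ha0 : (0:ℝ) < a := lt_of_lt_of_le one_pos ha
  have hmf : AEStronglyMeasurable F (volume.restrict (Set.Ioi a)) :=
    hm.mono_measure (Measure.restrict_mono (fun x hx => le_trans ha (le_of_lt hx)) le_rfl)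
  have hms : AEStronglyMeasurable (fun u : ℝ => (u:ℂ) ^ s) (volume.restrict (Set.Ioi a)) :=
    (integrableOn_Ioi_cpow_of_lt hs ha0).aestronglyMeasurable
  refine Integrable.mono' ((integrableOn_Ioi_rpow_of_lt hs ha0).mul_const c) (hms.mul hmf) ?_
  rw [ae_restrict_iff' measurableSet_Ioi]
  refine Eventually.of_forall fun u hu => ?_
  have hu0 : (0:ℝ) < u := lt_trans ha0 hu
  have h1u : (1:ℝ) ≤ u := le_of_lt (lt_of_le_of_lt ha hu)
  rw [norm_mul, Complex.norm_cpow_eq_rpow_re_of_pos hu0]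
  exact mul_le_mul le_rfl (hb u h1u) (norm_nonneg _) (Real.rpow_nonneg hu0.le _)

lemma aux_cont {f : ℝ → ℂ} (hloc : LocallyIntegrableOn f (Set.Ici 1)) :
    ContinuousOn (fun x : ℝ => ∫ u in (1:ℝ)..x, f u) (Set.Ici 1) := by
  intro x hx
  have hIcc : IntegrableOn f (Set.Icc 1 (x+1)) :=
    hloc.integrableOn_compact_subset (Set.Icc_subset_Ici_self) isCompact_Icc
  have hx1 : (1:ℝ) ≤ x + 1 := by
    have := hx; simp only [Set.mem_Ici] at this; linarith
  have h1 : Set.uIcc (1:ℝ) (x+1) = Set.Icc 1 (x+1) := Set.uIcc_of_le hx1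
  have hc : ContinuousOn (fun b : ℝ => ∫ u in (1:ℝ)..b, f u) (Set.Icc 1 (x+1)) := by
    have := continuousOn_primitive_interval (a := (1:ℝ)) (b := x+1) (μ := volume) (f := f)
      (by rwa [h1])
    rwa [h1] at this
  have hxm : x ∈ Set.Icc 1 (x+1) := ⟨hx, by linarith⟩
  refine (hc x hxm).mono_of_mem_nhdsWithin ?_
  rw [mem_nhdsWithin]
  exact ⟨Set.Iio (x+1), isOpen_Iio, by simp, fun y hy => ⟨hy.2, le_of_lt hy.1⟩⟩

lemma aux_fubini {t T : ℝ} {G K : ℝ → ℂ} {MG MK : ℝ}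
    (hGm : AEStronglyMeasurable G (volume.restrict (Set.Ioc t T)))
    (hKm : AEStronglyMeasurable K (volume.restrict (Set.Ioc t T)))
    (hGb : ∀ u ∈ Set.Ioc t T, ‖G u‖ ≤ MG) (hKb : ∀ v ∈ Set.Ioc t T, ‖K v‖ ≤ MK) :
    ∫ u in Set.Ioc t T, (∫ v in Set.Ioc u T, K v) * G u
      = ∫ v in Set.Ioc t T, K v * ∫ u in Set.Ioc t v, G u := by
  set μ := volume.restrict (Set.Ioc t T) with hμ
  haveI : IsFiniteMeasure μ := ⟨by
    rw [hμ, Measure.restrict_apply_univ]; exact measure_Ioc_lt_top⟩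
  set F : ℝ → ℝ → ℂ := fun u v => if u ≤ v then K v * G u else 0 with hF
  have hs : MeasurableSet {p : ℝ × ℝ | p.1 ≤ p.2} :=
    measurableSet_le measurable_fst measurable_snd
  have hFm : AEStronglyMeasurable (Function.uncurry F) (μ.prod μ) := by
    have he : Function.uncurry F
        = Set.indicator {p : ℝ × ℝ | p.1 ≤ p.2} (fun p => K p.2 * G p.1) := by
      ext p
      by_cases hle : p.1 ≤ p.2 <;>
        simp [Function.uncurry, hF, Set.indicator_apply, hle, Set.mem_setOf_eq]
    rw [he]
    exact ((hKm.comp_snd).mul (hGm.comp_fst)).indicator hs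
  have hFi : Integrable (Function.uncurry F) (μ.prod μ) := by
    refine Integrable.mono' (integrable_const (MK * MG)) hFm ?_
    rw [hμ, Measure.prod_restrict,
      ae_restrict_iff' (measurableSet_Ioc.prod measurableSet_Ioc)]
    refine Eventually.of_forall fun p hp => ?_
    obtain ⟨hp1, hp2⟩ := hp
    by_cases hle : p.1 ≤ p.2
    · simp only [Function.uncurry, hF, if_pos hle, norm_mul]
      exact mul_le_mul (hKb _ hp2) (hGb _ hp1) (norm_nonneg _)
        ((norm_nonneg _).trans (hKb _ hp2))
    · simp only [Function.uncurry, hF, if_neg hle, norm_zero]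
      exact mul_nonneg ((norm_nonneg _).trans (hKb _ hp2))
        ((norm_nonneg _).trans (hGb _ hp1))
  have hswap := integral_integral_swap hFi
  have hLHS : (∫ u, ∫ v, F u v ∂μ ∂μ)
      = ∫ u in Set.Ioc t T, (∫ v in Set.Ioc u T, K v) * G u := by
    refine setIntegral_congr_fun measurableSet_Ioc fun u hu => ?_
    have h1 : ∀ v, F u v = (Set.Ici u).indicator (fun v => K v * G u) v := by
      intro v; by_cases hle : u ≤ v <;>
        simp [hF, Set.indicator_apply, hle, Set.mem_Ici]
    calc ∫ v, F u v ∂μ = ∫ v in Set.Ioc t T, (Set.Ici u).indicator (fun v => K v * G u) v := by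
            rw [hμ]; exact integral_congr_ae (Eventually.of_forall h1)
      _ = ∫ v in Set.Ioc t T ∩ Set.Ici u, K v * G u := by
            rw [setIntegral_indicator measurableSet_Ici]
      _ = ∫ v in Set.Icc u T, K v * G u := by
            have hset : Set.Ioc t T ∩ Set.Ici u = Set.Icc u T := by
              ext v
              simp only [Set.mem_inter_iff, Set.mem_Ioc, Set.mem_Ici, Set.mem_Icc]
              exact ⟨fun h => ⟨h.2, h.1.2⟩, fun h => ⟨⟨lt_of_lt_of_le hu.1 h.1, h.2⟩, h.1⟩⟩
            rw [hset]
      _ = ∫ v in Set.Ioc u T, K v * G u := integral_Icc_eq_integral_Ioc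
      _ = (∫ v in Set.Ioc u T, K v) * G u := by rw [MeasureTheory.integral_mul_const]
  have hRHS : (∫ v, ∫ u, F u v ∂μ ∂μ)
      = ∫ v in Set.Ioc t T, K v * ∫ u in Set.Ioc t v, G u := by
    refine setIntegral_congr_fun measurableSet_Ioc fun v hv => ?_
    have h1 : ∀ u, F u v = (Set.Iic v).indicator (fun u => K v * G u) u := by
      intro u; by_cases hle : u ≤ v <;>
        simp [hF, Set.indicator_apply, hle, Set.mem_Iic]
    calc ∫ u, F u v ∂μ = ∫ u in Set.Ioc t T, (Set.Iic v).indicator (fun u => K v * G u) u := by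
            rw [hμ]; exact integral_congr_ae (Eventually.of_forall h1)
      _ = ∫ u in Set.Ioc t T ∩ Set.Iic v, K v * G u := by
            rw [setIntegral_indicator measurableSet_Iic]
      _ = ∫ u in Set.Ioc t v, K v * G u := by
            have hset : Set.Ioc t T ∩ Set.Iic v = Set.Ioc t v := by
              ext u
              simp only [Set.mem_inter_iff, Set.mem_Ioc, Set.mem_Iic]
              exact ⟨fun h => ⟨h.1.1, h.2⟩, fun h => ⟨⟨h.1, h.2.trans hv.2⟩, h.2⟩⟩
            rw [hset]
      _ = K v * ∫ u in Set.Ioc t v, G u := by rw [MeasureTheory.integral_const_mul]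
  rw [hLHS, hRHS] at hswap
  exact hswap

lemma aux_cpow_contOn {s : ℂ} {A : Set ℝ} (hA : ∀ x ∈ A, (0:ℝ) < x) :
    ContinuousOn (fun v : ℝ => (v:ℂ) ^ s) A := fun x hx =>
  (Complex.continuousAt_ofReal_cpow_const _ _ (Or.inr (hA x hx).ne')).continuousWithinAt

lemma aux_cpow_norm_le_one {s : ℂ} (hs : s.re ≤ 0) {x : ℝ} (hx : 1 ≤ x) :
    ‖(x:ℂ) ^ s‖ ≤ 1 := by
  rw [Complex.norm_cpow_eq_rpow_re_of_pos (lt_of_lt_of_le one_pos hx)]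
  exact Real.rpow_le_one_of_one_le_of_nonpos hx hs

lemma aux_finite {w : ℂ} (hw : 0 < w.re) {t T : ℝ} (ht : 1 ≤ t) (hT : t ≤ T)
    {f : ℝ → ℂ} {cf : ℝ}
    (hfm : AEStronglyMeasurable f (volume.restrict (Set.Ioc t T)))
    (hfb : ∀ u ∈ Set.Ioc t T, ‖f u‖ ≤ cf)
    (hfi : IntegrableOn f (Set.Ioc t T)) :
    ∫ u in Set.Ioc t T, (u:ℂ) ^ (-1-w) * f u
      = (T:ℂ) ^ (-1-w) * (∫ u in Set.Ioc t T, f u)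
        + (1+w) * ∫ v in Set.Ioc t T, (v:ℂ) ^ (-2-w) * (∫ u in Set.Ioc t v, f u) := by
  have hpos : ∀ x ∈ Set.Ioc t T, (0:ℝ) < x := fun x hx =>
    lt_of_lt_of_le one_pos (le_of_lt (lt_of_le_of_lt ht hx.1))
  have hone : ∀ x ∈ Set.Ioc t T, (1:ℝ) ≤ x := fun x hx => le_of_lt (lt_of_le_of_lt ht hx.1)
  have hm1w : (-1:ℂ) - w ≠ 0 := by
    intro h
    have : ((-1:ℂ) - w).re = 0 := by rw [h]; simp
    simp only [Complex.sub_re, Complex.neg_re, Complex.one_re] at this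
    linarith
  have hgm : AEStronglyMeasurable (fun u : ℝ => (u:ℂ) ^ (-1-w))
      (volume.restrict (Set.Ioc t T)) :=
    (aux_cpow_contOn hpos).aestronglyMeasurable measurableSet_Ioc
  have hhm : AEStronglyMeasurable (fun v : ℝ => (v:ℂ) ^ (-2-w))
      (volume.restrict (Set.Ioc t T)) :=
    (aux_cpow_contOn hpos).aestronglyMeasurable measurableSet_Ioc
  have hgfi : IntegrableOn (fun u : ℝ => (u:ℂ) ^ (-1-w) * f u) (Set.Ioc t T) := by
    refine Integrable.mono' hfi.norm (hgm.mul hfm) ?_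
    rw [ae_restrict_iff' measurableSet_Ioc]
    refine Eventually.of_forall fun u hu => ?_
    rw [norm_mul]
    calc ‖(u:ℂ) ^ (-1-w)‖ * ‖f u‖ ≤ 1 * ‖f u‖ :=
          mul_le_mul_of_nonneg_right
            (aux_cpow_norm_le_one (by simp [Complex.sub_re]; linarith) (hone u hu))
            (norm_nonneg _)
      _ = ‖f u‖ := one_mul _
  have hhb : ∀ v ∈ Set.Ioc t T, ‖(v:ℂ) ^ (-2-w)‖ ≤ 1 := fun v hv =>
    aux_cpow_norm_le_one (by simp [Complex.sub_re]; linarith) (hone v hv)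
  have hfub := aux_fubini hfm hhm hfb hhb
  have hclosed : ∀ u ∈ Set.Ioc t T,
      (∫ v in Set.Ioc u T, (v:ℂ) ^ (-2-w))
        = ((T:ℂ) ^ (-1-w) - (u:ℂ) ^ (-1-w)) / (-1-w) := by
    intro u hu
    have hu0 : (0:ℝ) < u := hpos u hu
    have huT : u ≤ T := hu.2
    rw [← intervalIntegral.integral_of_le huT]
    have h0 : (0:ℝ) ∉ Set.uIcc u T := by
      rw [Set.uIcc_of_le huT]
      intro h0
      exact absurd h0.1 (not_le.mpr hu0)
    have hne : (-2:ℂ) - w ≠ -1 := by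
      intro h
      have : ((-2:ℂ) - w).re = -1 := by rw [h]; simp
      simp only [Complex.sub_re] at this
      norm_num at this
      linarith
    rw [integral_cpow (Or.inr ⟨hne, h0⟩)]
    have he : (-2:ℂ) - w + 1 = -1 - w := by ring
    rw [he]
  -- pointwise identity
  have hpt : ∀ u ∈ Set.Ioc t T,
      (u:ℂ) ^ (-1-w) * f u
        = (T:ℂ) ^ (-1-w) * f u
          + (1+w) * ((∫ v in Set.Ioc u T, (v:ℂ) ^ (-2-w)) * f u) := by
    intro u hu
    rw [hclosed u hu]
    field_simp
    ring
  have i2 : IntegrableOn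
      (fun u => (1+w) * ((∫ v in Set.Ioc u T, (v:ℂ) ^ (-2-w)) * f u)) (Set.Ioc t T) := by
    have h' : IntegrableOn
        (fun u : ℝ => (u:ℂ) ^ (-1-w) * f u - (T:ℂ) ^ (-1-w) * f u) (Set.Ioc t T) :=
      hgfi.sub (hfi.const_mul _)
    refine h'.congr_fun (fun u hu => ?_) measurableSet_Ioc
    linear_combination hpt u hu
  calc ∫ u in Set.Ioc t T, (u:ℂ) ^ (-1-w) * f u
      = ∫ u in Set.Ioc t T,
          ((T:ℂ) ^ (-1-w) * f u
            + (1+w) * ((∫ v in Set.Ioc u T, (v:ℂ) ^ (-2-w)) * f u)) :=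
        setIntegral_congr_fun measurableSet_Ioc hpt
    _ = (∫ u in Set.Ioc t T, (T:ℂ) ^ (-1-w) * f u)
        + ∫ u in Set.Ioc t T, (1+w) * ((∫ v in Set.Ioc u T, (v:ℂ) ^ (-2-w)) * f u) :=
        integral_add (hfi.const_mul _) i2
    _ = (T:ℂ) ^ (-1-w) * (∫ u in Set.Ioc t T, f u)
        + (1+w) * ∫ u in Set.Ioc t T, (∫ v in Set.Ioc u T, (v:ℂ) ^ (-2-w)) * f u := by
        rw [MeasureTheory.integral_const_mul, MeasureTheory.integral_const_mul]
    _ = (T:ℂ) ^ (-1-w) * (∫ u in Set.Ioc t T, f u)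
        + (1+w) * ∫ v in Set.Ioc t T, (v:ℂ) ^ (-2-w) * (∫ u in Set.Ioc t v, f u) := by
        rw [hfub]
lemma aux_tail {w : ℂ} (hw : 0 < w.re) {t : ℝ} (ht : 1 ≤ t) {f E : ℝ → ℂ} {cf ce : ℝ}
    (hfm : AEStronglyMeasurable f (volume.restrict (Set.Ici 1)))
    (hfb : ∀ u : ℝ, 1 ≤ u → ‖f u‖ ≤ cf)
    (hEm : AEStronglyMeasurable E (volume.restrict (Set.Ici 1)))
    (hEb : ∀ x : ℝ, 1 ≤ x → ‖E x‖ ≤ ce)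
    (hfi : ∀ T : ℝ, t ≤ T → IntegrableOn f (Set.Ioc t T))
    (hEdiff : ∀ v : ℝ, t ≤ v → ∫ u in Set.Ioc t v, f u = E v - E t) :
    ∫ u in Set.Ioi t, (u:ℂ) ^ (-1-w) * f u
      = (1+w) * ∫ v in Set.Ioi t, (v:ℂ) ^ (-2-w) * (E v - E t) := by
  have ht0 : (0:ℝ) < t := lt_of_lt_of_le one_pos ht
  have hs1 : ((-1:ℂ) - w).re < -1 := by
    simp only [Complex.sub_re, Complex.neg_re, Complex.one_re]; linarith
  have hs2 : ((-2:ℂ) - w).re < -1 := by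
    simp only [Complex.sub_re]; norm_num; linarith
  have hce : 0 ≤ ce := le_trans (norm_nonneg _) (hEb t ht)
  have hgfi : IntegrableOn (fun u : ℝ => (u:ℂ) ^ (-1-w) * f u) (Set.Ioi t) :=
    aux_int hfb hfm hs1 ht
  have hint2 : IntegrableOn (fun v : ℝ => (v:ℂ) ^ (-2-w) * (E v - E t)) (Set.Ioi t) := by
    have h' := (aux_int hEb hEm hs2 ht).sub
      ((integrableOn_Ioi_cpow_of_lt hs2 ht0).mul_const (E t))
    exact IntegrableOn.congr_fun h' (fun v _ => by simp only [Pi.sub_apply]; ring)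
      measurableSet_Ioi
  have hconv1 : Tendsto (fun T => ∫ u in t..T, (u:ℂ) ^ (-1-w) * f u) atTop
      (𝓝 (∫ u in Set.Ioi t, (u:ℂ) ^ (-1-w) * f u)) :=
    intervalIntegral_tendsto_integral_Ioi t hgfi tendsto_id
  have hconv2a : Tendsto (fun T => ∫ v in t..T, (v:ℂ) ^ (-2-w) * (E v - E t)) atTop
      (𝓝 (∫ v in Set.Ioi t, (v:ℂ) ^ (-2-w) * (E v - E t))) :=
    intervalIntegral_tendsto_integral_Ioi t hint2 tendsto_id
  have hzero : Tendsto (fun T : ℝ => (T:ℂ) ^ (-1-w) * (E T - E t)) atTop (𝓝 0) := by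
    apply squeeze_zero_norm' (a := fun T : ℝ => T ^ (-(1 + w.re)) * (2 * ce))
    · filter_upwards [eventually_ge_atTop (1:ℝ)] with T hT
      rw [norm_mul,
        Complex.norm_cpow_eq_rpow_re_of_pos (lt_of_lt_of_le one_pos hT)]
      have hre : ((-1:ℂ) - w).re = -(1 + w.re) := by
        simp only [Complex.sub_re, Complex.neg_re, Complex.one_re]; ring
      rw [hre]
      refine mul_le_mul_of_nonneg_left ?_ (Real.rpow_nonneg (by linarith) _)
      calc ‖E T - E t‖ ≤ ‖E T‖ + ‖E t‖ := norm_sub_le _ _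
        _ ≤ ce + ce := add_le_add (hEb T hT) (hEb t ht)
        _ = 2 * ce := by ring
    · have := (tendsto_rpow_neg_atTop (show (0:ℝ) < 1 + w.re by linarith)).mul_const (2 * ce)
      simpa using this
  have hfinite : (fun T => ∫ u in t..T, (u:ℂ) ^ (-1-w) * f u)
      =ᶠ[atTop] fun T => (T:ℂ) ^ (-1-w) * (E T - E t)
        + (1+w) * ∫ v in t..T, (v:ℂ) ^ (-2-w) * (E v - E t) := by
    filter_upwards [eventually_ge_atTop t] with T hT
    rw [intervalIntegral.integral_of_le hT, intervalIntegral.integral_of_le hT]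
    have hfm' : AEStronglyMeasurable f (volume.restrict (Set.Ioc t T)) :=
      hfm.mono_measure (Measure.restrict_mono
        (fun x hx => le_of_lt (lt_of_le_of_lt ht hx.1)) le_rfl)
    have hfin := aux_finite hw ht hT hfm'
      (fun u hu => hfb u (le_of_lt (lt_of_le_of_lt ht hu.1))) (hfi T hT)
    rw [hfin, hEdiff T hT]
    congr 1
    congr 1
    refine setIntegral_congr_fun measurableSet_Ioc fun v hv => ?_
    rw [hEdiff v (le_of_lt hv.1)]
  have h2 : Tendsto (fun T : ℝ => (T:ℂ) ^ (-1-w) * (E T - E t)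
      + (1+w) * ∫ v in t..T, (v:ℂ) ^ (-2-w) * (E v - E t)) atTop
      (𝓝 (0 + (1+w) * ∫ v in Set.Ioi t, (v:ℂ) ^ (-2-w) * (E v - E t))) :=
    hzero.add (hconv2a.const_mul (1+w))
  have h3 := tendsto_nhds_unique hconv1 (Filter.Tendsto.congr' hfinite.symm h2)
  rwa [zero_add] at h3
noncomputable def psi (η : ℝ → ℂ) (w : ℂ) (t : ℝ) : ℂ :=
  ((t ^ w.re : ℝ) : ℂ) * (1 + (1 - w) * ∫ u in (1:ℝ)..t, (u : ℂ) ^ (-1 - w) * η u)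

noncomputable def mu (η : ℝ → ℂ) (w : ℂ) : ℂ :=
  -1 - (1 - w) * ∫ u in Set.Ioi (1:ℝ), (u : ℂ) ^ (-1 - w) * η u

noncomputable def delta (η : ℝ → ℂ) (s : ℂ) (t : ℝ) : ℂ :=
  (((2 * s.re - 1 : ℝ) : ℂ))⁻¹ * (psi η s t - psi η (1 - (starRingEnd ℂ) s) t)

theorem stmt4 (η : ℝ → ℂ) (w : ℂ) (c ctil : ℝ) (ρ : ℂ)
    (hw : 0 < w.re) (hwim : w.im ≠ 0)
    (hc : ∀ t : ℝ, 1 ≤ t → ‖η t‖ ≤ c)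
    (hloc : LocallyIntegrableOn η (Set.Ici 1))
    (hρ : ρ ≠ 0)
    (hrot : ∀ t : ℝ, 1 ≤ t → ‖∫ u in (1:ℝ)..t, (η u - ρ)‖ < ctil)
    (hmu : mu η w = 0) :
    (∀ t : ℝ, 1 ≤ t →
      ‖psi η w t - ρ * ((w - 1) / w) * (t : ℂ) ^ (-(Complex.I * w.im))‖
        < 2 * ctil * ‖1 - w ^ 2‖ / (1 + w.re) * t⁻¹) ∧
    ∃ K : ℝ, ∀ t : ℝ, 1 ≤ t →
      t * ‖psi η w t - ρ * ((w - 1) / w) * (t : ℂ) ^ (-(Complex.I * w.im))‖ ≤ K := by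
  have key : ∀ t : ℝ, 1 ≤ t →
      ‖psi η w t - ρ * ((w - 1) / w) * (t : ℂ) ^ (-(Complex.I * w.im))‖
        < 2 * ctil * ‖1 - w ^ 2‖ / (1 + w.re) * t⁻¹ := by
    have hw1 : w - 1 ≠ 0 := by
      intro h
      apply hwim
      have hh : w = 1 := by linear_combination h
      rw [hh]; simp
    have h1w : (1:ℂ) + w ≠ 0 := by
      intro h
      have hh : ((1:ℂ) + w).re = 0 := by rw [h]; simp
      simp only [Complex.add_re, Complex.one_re] at hh; linarith
    have hm1w : (-1:ℂ) - w ≠ 0 := by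
      intro h
      have hh : ((-1:ℂ) - w).re = 0 := by rw [h]; simp
      simp only [Complex.sub_re, Complex.neg_re, Complex.one_re] at hh; linarith
    have hw0 : w ≠ 0 := by
      intro h; apply hwim; rw [h]; simp
    have hs1 : ((-1:ℂ) - w).re < -1 := by
      simp only [Complex.sub_re, Complex.neg_re, Complex.one_re]; linarith
    have hs2 : ((-2:ℂ) - w).re < -1 := by
      simp only [Complex.sub_re]; norm_num; linarith
    have hctil : 0 < ctil := by simpa using hrot 1 le_rfl
    have hηm : AEStronglyMeasurable η (volume.restrict (Set.Ici 1)) :=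
      hloc.aestronglyMeasurable
    have hfm : AEStronglyMeasurable (fun u => η u - ρ) (volume.restrict (Set.Ici 1)) :=
      hηm.sub aestronglyMeasurable_const
    have hfb : ∀ u : ℝ, 1 ≤ u → ‖η u - ρ‖ ≤ c + ‖ρ‖ := fun u hu =>
      (norm_sub_le _ _).trans (add_le_add_left (hc u hu) _)
    have hηii : ∀ a b : ℝ, 1 ≤ a → a ≤ b → IntervalIntegrable η volume a b := by
      intro a b ha hab
      have h' := hloc.integrableOn_compact_subset
        (show Set.Icc a b ⊆ Set.Ici 1 from fun x hx => le_trans ha hx.1) isCompact_Icc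
      rw [← Set.uIcc_of_le hab] at h'
      exact h'.intervalIntegrable
    have hfii : ∀ a b : ℝ, 1 ≤ a → a ≤ b → IntervalIntegrable (fun u => η u - ρ) volume a b :=
      fun a b ha hab => (hηii a b ha hab).sub intervalIntegrable_const
    have hEb : ∀ x : ℝ, 1 ≤ x → ‖∫ u in (1:ℝ)..x, (η u - ρ)‖ ≤ ctil := fun x hx =>
      (hrot x hx).le
    have hEcont : ContinuousOn (fun x : ℝ => ∫ u in (1:ℝ)..x, (η u - ρ)) (Set.Ici 1) := by
      have h1 := aux_cont hloc
      have h2 : ContinuousOn (fun x : ℝ => (∫ u in (1:ℝ)..x, η u) - (x - 1 : ℝ) • ρ)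
          (Set.Ici 1) :=
        h1.sub (((continuous_id.sub continuous_const).smul continuous_const).continuousOn)
      refine h2.congr fun x hx => ?_
      rw [intervalIntegral.integral_sub (hηii 1 x le_rfl hx) intervalIntegrable_const,
        intervalIntegral.integral_const]
    have hEm : AEStronglyMeasurable (fun x : ℝ => ∫ u in (1:ℝ)..x, (η u - ρ))
        (volume.restrict (Set.Ici 1)) := hEcont.aestronglyMeasurable measurableSet_Ici
    intro t ht
    have ht0 : (0:ℝ) < t := lt_of_lt_of_le one_pos ht
    have htc : (t:ℂ) ≠ 0 := Complex.ofReal_ne_zero.mpr ht0.ne'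
    have hEdiff : ∀ v : ℝ, t ≤ v → ∫ u in Set.Ioc t v, (η u - ρ)
        = (∫ u in (1:ℝ)..v, (η u - ρ)) - ∫ u in (1:ℝ)..t, (η u - ρ) := by
      intro v hv
      rw [← intervalIntegral.integral_of_le hv]
      have h' := intervalIntegral.integral_add_adjacent_intervals
        (hfii 1 t le_rfl ht) (hfii t v ht hv)
      linear_combination h'
    have hgη1 : IntegrableOn (fun u : ℝ => (u:ℂ) ^ (-1 - w) * η u) (Set.Ioi 1) :=
      aux_int hc hηm hs1 le_rfl
    have hgηt : IntegrableOn (fun u : ℝ => (u:ℂ) ^ (-1 - w) * η u) (Set.Ioi t) :=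
      aux_int hc hηm hs1 ht
    have hgft : IntegrableOn (fun u : ℝ => (u:ℂ) ^ (-1 - w) * (η u - ρ)) (Set.Ioi t) :=
      aux_int hfb hfm hs1 ht
    have hhEt : IntegrableOn
        (fun v : ℝ => (v:ℂ) ^ (-2 - w) * ∫ u in (1:ℝ)..v, (η u - ρ)) (Set.Ioi t) :=
      aux_int hEb hEm hs2 ht
    have hht : IntegrableOn (fun v : ℝ => (v:ℂ) ^ (-2 - w)) (Set.Ioi t) :=
      integrableOn_Ioi_cpow_of_lt hs2 ht0
    have hgt : IntegrableOn (fun u : ℝ => (u:ℂ) ^ (-1 - w)) (Set.Ioi t) :=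
      integrableOn_Ioi_cpow_of_lt hs1 ht0
    have hμ2 : (1 - w) * ∫ u in Set.Ioi (1:ℝ), (u:ℂ) ^ (-1 - w) * η u = -1 := by
      unfold mu at hmu; linear_combination -hmu
    have hsplit : ∫ u in Set.Ioi (1:ℝ), (u:ℂ) ^ (-1 - w) * η u
        = (∫ u in (1:ℝ)..t, (u:ℂ) ^ (-1 - w) * η u)
          + ∫ u in Set.Ioi t, (u:ℂ) ^ (-1 - w) * η u := by
      rw [intervalIntegral.integral_of_le ht,
        ← setIntegral_union (Set.Ioc_disjoint_Ioi le_rfl) measurableSet_Ioi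
          (hgη1.mono_set Set.Ioc_subset_Ioi_self) hgηt, Set.Ioc_union_Ioi_eq_Ioi ht]
    have hpsi : psi η w t = ((t ^ w.re : ℝ) : ℂ)
        * ((w - 1) * ∫ u in Set.Ioi t, (u:ℂ) ^ (-1 - w) * η u) := by
      unfold psi
      congr 1
      linear_combination hμ2 - (1 - w) * hsplit
    have hIg : ∫ u in Set.Ioi t, (u:ℂ) ^ (-1 - w) = -(t:ℂ) ^ (-w) / (-w) := by
      have h' := integral_Ioi_cpow_of_lt hs1 ht0
      rw [show (-1 : ℂ) - w + 1 = -w by ring] at h'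
      exact h'
    have hIh : ∫ v in Set.Ioi t, (v:ℂ) ^ (-2 - w) = -(t:ℂ) ^ (-1 - w) / (-1 - w) := by
      have h' := integral_Ioi_cpow_of_lt hs2 ht0
      rw [show (-2 : ℂ) - w + 1 = -1 - w by ring] at h'
      exact h'
    have htail : (∫ u in Set.Ioi t, (u:ℂ) ^ (-1 - w) * η u)
        = (∫ u in Set.Ioi t, (u:ℂ) ^ (-1 - w) * (η u - ρ)) + (-(t:ℂ) ^ (-w) / (-w)) * ρ := by
      rw [← hIg, ← MeasureTheory.integral_mul_const,
        ← integral_add hgft (hgt.mul_const ρ)]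
      exact setIntegral_congr_fun measurableSet_Ioi fun u _ => by ring
    have h3 : ((w.re : ℂ)) - w = -(Complex.I * w.im) := by
      apply Complex.ext <;> simp
    have h2 : (t:ℂ) ^ ((w.re : ℂ)) * (t:ℂ) ^ (-w) = (t:ℂ) ^ (-(Complex.I * w.im)) := by
      rw [← Complex.cpow_add _ _ htc, ← h3, sub_eq_add_neg]
    have h1 : ((t ^ w.re : ℝ) : ℂ) = (t:ℂ) ^ ((w.re : ℂ)) := Complex.ofReal_cpow ht0.le _
    have hmainterm : ((t ^ w.re : ℝ) : ℂ) * ((w - 1) * ((-(t:ℂ) ^ (-w) / (-w)) * ρ))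
        = ρ * ((w - 1) / w) * (t:ℂ) ^ (-(Complex.I * w.im)) := by
      rw [h1, ← h2, neg_div_neg_eq]
      field_simp
    have hψsub : psi η w t - ρ * ((w - 1) / w) * (t:ℂ) ^ (-(Complex.I * w.im))
        = ((t ^ w.re : ℝ) : ℂ)
          * ((w - 1) * ∫ u in Set.Ioi t, (u:ℂ) ^ (-1 - w) * (η u - ρ)) := by
      rw [hpsi, htail, ← hmainterm]; ring
    have hD := aux_tail hw ht hfm hfb hEm hEb (fun T hT => (hfii t T ht hT).1) hEdiff
    have hsub2 : ∫ v in Set.Ioi t, (v:ℂ) ^ (-2 - w)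
          * ((∫ u in (1:ℝ)..v, (η u - ρ)) - ∫ u in (1:ℝ)..t, (η u - ρ))
        = (∫ v in Set.Ioi t, (v:ℂ) ^ (-2 - w) * ∫ u in (1:ℝ)..v, (η u - ρ))
          - (-(t:ℂ) ^ (-1 - w) / (-1 - w)) * ∫ u in (1:ℝ)..t, (η u - ρ) := by
      rw [← hIh, ← MeasureTheory.integral_mul_const,
        ← integral_sub hhEt (hht.mul_const _)]
      exact setIntegral_congr_fun measurableSet_Ioi fun v _ => by ring
    have hcoef : (1 + w) * (-(t:ℂ) ^ (-1 - w) / (-1 - w)) = (t:ℂ) ^ (-1 - w) := by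
      field_simp
      ring
    have hDfinal : ∫ u in Set.Ioi t, (u:ℂ) ^ (-1 - w) * (η u - ρ)
        = (1 + w) * (∫ v in Set.Ioi t, (v:ℂ) ^ (-2 - w) * ∫ u in (1:ℝ)..v, (η u - ρ))
          - (t:ℂ) ^ (-1 - w) * ∫ u in (1:ℝ)..t, (η u - ρ) := by
      rw [hD, hsub2]
      linear_combination (-(∫ u in (1:ℝ)..t, (η u - ρ))) * hcoef
    set τ : ℝ := t ^ (-(1 + w.re)) with hτ
    have hτ0 : 0 < τ := Real.rpow_pos_of_pos ht0 _
    have hnormτ : ‖(t:ℂ) ^ (-1 - w)‖ = τ := by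
      rw [Complex.norm_cpow_eq_rpow_re_of_pos ht0, hτ]
      congr 1
      simp only [Complex.sub_re, Complex.neg_re, Complex.one_re]; ring
    have hp : (0:ℝ) < 1 + w.re := by linarith
    have hb1 : ‖∫ v in Set.Ioi t, (Complex.ofReal v) ^ (-2 - w) * ∫ u in (1:ℝ)..v, (η u - ρ)‖
        ≤ ctil * (τ / (1 + w.re)) := by
      have hgint : Integrable (fun v : ℝ => ctil * v ^ (-(2 + w.re)))
          (volume.restrict (Set.Ioi t)) :=
        (integrableOn_Ioi_rpow_of_lt (by linarith) ht0).const_mul ctil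
      have hbound : ∀ᵐ v ∂(volume.restrict (Set.Ioi t)),
          ‖(Complex.ofReal v) ^ (-2 - w) * ∫ u in (1:ℝ)..v, (η u - ρ)‖
            ≤ ctil * v ^ (-(2 + w.re)) := by
        rw [ae_restrict_iff' measurableSet_Ioi]
        refine Eventually.of_forall fun v hv => ?_
        have hv1 : (1:ℝ) ≤ v := le_of_lt (lt_of_le_of_lt ht hv)
        have hv0 : (0:ℝ) < v := lt_of_lt_of_le one_pos hv1
        rw [norm_mul, Complex.norm_cpow_eq_rpow_re_of_pos hv0,
          show ((-2:ℂ) - w).re = -(2 + w.re) by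
            simp only [Complex.sub_re]; norm_num; ring, mul_comm ctil _]
        exact mul_le_mul_of_nonneg_left (hEb v hv1) (Real.rpow_nonneg hv0.le _)
      have hval : ∫ v in Set.Ioi t, v ^ (-(2 + w.re)) = τ / (1 + w.re) := by
        rw [integral_Ioi_rpow_of_lt (by linarith) ht0,
          show -(2 + w.re) + 1 = -(1 + w.re) by ring, neg_div_neg_eq]
      calc ‖∫ v in Set.Ioi t, (Complex.ofReal v) ^ (-2 - w) * ∫ u in (1:ℝ)..v, (η u - ρ)‖
          ≤ ∫ v in Set.Ioi t, ctil * v ^ (-(2 + w.re)) :=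
            norm_integral_le_of_norm_le hgint hbound
        _ = ctil * ∫ v in Set.Ioi t, v ^ (-(2 + w.re)) := MeasureTheory.integral_const_mul _ _
        _ = ctil * (τ / (1 + w.re)) := by rw [hval]
    have h1wre : (1:ℝ) + w.re ≤ ‖(1:ℂ) + w‖ := by
      have h' := Complex.re_le_norm ((1:ℂ) + w)
      simpa [Complex.add_re] using h'
    have hDnorm : ‖∫ u in Set.Ioi t, (u:ℂ) ^ (-1 - w) * (η u - ρ)‖
        < 2 * ‖(1:ℂ) + w‖ * ctil * τ / (1 + w.re) := by
      rw [hDfinal]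
      have h6 : τ * ‖∫ u in (1:ℝ)..t, (η u - ρ)‖ < τ * ctil :=
        mul_lt_mul_of_pos_left (hrot t ht) hτ0
      have h7 : τ * ctil ≤ ‖(1:ℂ) + w‖ * (ctil * (τ / (1 + w.re))) := by
        have h8 : (1 + w.re) * (ctil * τ) ≤ ‖(1:ℂ) + w‖ * (ctil * τ) :=
          mul_le_mul_of_nonneg_right h1wre (le_of_lt (mul_pos hctil hτ0))
        calc τ * ctil = ((1 + w.re) * (ctil * τ)) / (1 + w.re) := by field_simp
          _ ≤ (‖(1:ℂ) + w‖ * (ctil * τ)) / (1 + w.re) := by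
              exact (div_le_div_iff_of_pos_right hp).mpr h8
          _ = ‖(1:ℂ) + w‖ * (ctil * (τ / (1 + w.re))) := by ring
      calc ‖(1 + w) * (∫ v in Set.Ioi t, (v:ℂ) ^ (-2 - w) * ∫ u in (1:ℝ)..v, (η u - ρ))
            - (t:ℂ) ^ (-1 - w) * ∫ u in (1:ℝ)..t, (η u - ρ)‖
          ≤ ‖(1 + w) * ∫ v in Set.Ioi t, (v:ℂ) ^ (-2 - w) * ∫ u in (1:ℝ)..v, (η u - ρ)‖
            + ‖(t:ℂ) ^ (-1 - w) * ∫ u in (1:ℝ)..t, (η u - ρ)‖ := norm_sub_le _ _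
        _ = ‖(1:ℂ) + w‖ * ‖∫ v in Set.Ioi t, (v:ℂ) ^ (-2 - w) * ∫ u in (1:ℝ)..v, (η u - ρ)‖
            + τ * ‖∫ u in (1:ℝ)..t, (η u - ρ)‖ := by rw [norm_mul, norm_mul, hnormτ]
        _ < ‖(1:ℂ) + w‖ * (ctil * (τ / (1 + w.re))) + τ * ctil := by
            refine add_lt_add_of_le_of_lt (mul_le_mul_of_nonneg_left hb1 (norm_nonneg _)) h6
        _ ≤ ‖(1:ℂ) + w‖ * (ctil * (τ / (1 + w.re)))
            + ‖(1:ℂ) + w‖ * (ctil * (τ / (1 + w.re))) := add_le_add_right h7 _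
        _ = 2 * ‖(1:ℂ) + w‖ * ctil * τ / (1 + w.re) := by ring
    rw [hψsub, norm_mul, norm_mul]
    have hnorm_t : ‖((t ^ w.re : ℝ) : ℂ)‖ = t ^ w.re := by
      rw [Complex.norm_real]
      exact abs_of_nonneg (Real.rpow_nonneg ht0.le _)
    rw [hnorm_t]
    have hwpos : 0 < ‖w - (1:ℂ)‖ := norm_pos_iff.mpr hw1
    have htr : 0 < t ^ w.re := Real.rpow_pos_of_pos ht0 _
    have hττ : t ^ w.re * τ = t⁻¹ := by
      rw [hτ, ← Real.rpow_add ht0, show w.re + -(1 + w.re) = -1 by ring,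
        Real.rpow_neg_one]
    have hfact : ‖(1:ℂ) - w ^ 2‖ = ‖w - 1‖ * ‖(1:ℂ) + w‖ := by
      rw [show ((1:ℂ) - w ^ 2) = -((w - 1) * (1 + w)) by ring, norm_neg, norm_mul]
    calc t ^ w.re * (‖w - 1‖ * ‖∫ u in Set.Ioi t, (u:ℂ) ^ (-1 - w) * (η u - ρ)‖)
        < t ^ w.re * (‖w - 1‖ * (2 * ‖(1:ℂ) + w‖ * ctil * τ / (1 + w.re))) :=
          mul_lt_mul_of_pos_left (mul_lt_mul_of_pos_left hDnorm hwpos) htr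
      _ = 2 * ctil * ‖1 - w ^ 2‖ / (1 + w.re) * t⁻¹ := by
          rw [hfact, ← hττ]
          field_simp

  refine ⟨key, ⟨2 * ctil * ‖1 - w ^ 2‖ / (1 + w.re), fun t ht => ?_⟩⟩
  have ht0 : (0:ℝ) < t := lt_of_lt_of_le one_pos ht
  calc t * ‖psi η w t - ρ * ((w - 1) / w) * (t : ℂ) ^ (-(Complex.I * w.im))‖
      ≤ t * (2 * ctil * ‖1 - w ^ 2‖ / (1 + w.re) * t⁻¹) :=
        mul_le_mul_of_nonneg_left (key t ht).le ht0.le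
    _ = 2 * ctil * ‖1 - w ^ 2‖ / (1 + w.re) := by
        field_simp
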